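/- Strange duality formalism: let A and B be finite-dimensional vector spaces of the same dimension m, and s ∈ A ⊗ B. Suppose there exist linear functionals x_1,…,x_m ∈ A^* and y_1,…,y_m ∈ B^* such that (x_a ⊗ y_b)(s) = 0 for a ≠ b and (x_a ⊗ y_a)(s) ≠ 0 for all a. Then: (1) the elements α_a = (x_a ⊗ id)(s) ∈ B form a basis of B and β_a = (id ⊗ y_a)(s) ∈ A form a basis of A; (2) the induced map D: A^* → B, φ ↦ (φ ⊗ id)(s), is an isomorphism; (3) s = Σ_a c_a β_a ⊗ α_a for nonzero scalars c_a (explicitly c_a = ((x_a ⊗ y_a)(s))^{-1} after suitable normalization, i.e., s is 'diagonal' in these bases). -/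

import Mathlib

open TensorProduct

section Aux

variable {K A B : Type*} [Field K] [AddCommGroup A] [Module K A] [AddCommGroup B] [Module K B]

lemma sd_aux1 (x : Module.Dual K A) (y : Module.Dual K B) (s : A ⊗[K] B) :
    y (TensorProduct.lid K B (TensorProduct.map x LinearMap.id s)) =
      TensorProduct.lid K K (TensorProduct.map x y s) := by
  induction s using TensorProduct.induction_on with
  | zero => simp
  | tmul a b => simp [smul_eq_mul]
  | add u v hu hv => simp [hu, hv]

lemma sd_aux2 (x : Module.Dual K A) (y : Module.Dual K B) (s : A ⊗[K] B) :
    x (TensorProduct.rid K A (TensorProduct.map LinearMap.id y s)) =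
      TensorProduct.lid K K (TensorProduct.map x y s) := by
  induction s using TensorProduct.induction_on with
  | zero => simp
  | tmul a b => simp [smul_eq_mul, mul_comm]
  | add u v hu hv => simp [hu, hv]

lemma sd_expand {m : ℕ} (bβ : Module.Basis (Fin m) K A) (s : A ⊗[K] B) :
    s = ∑ a, (bβ a) ⊗ₜ[K]
      (TensorProduct.lid K B (TensorProduct.map (bβ.coord a) LinearMap.id s)) := by
  induction s using TensorProduct.induction_on with
  | zero => simp
  | tmul a b =>
      simp only [TensorProduct.map_tmul, LinearMap.id_coe, id_eq, TensorProduct.lid_tmul,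
        Module.Basis.coord_apply, TensorProduct.tmul_smul]
      simp_rw [TensorProduct.smul_tmul', ← TensorProduct.sum_tmul, Module.Basis.sum_repr]
  | add u v hu hv =>
      simp only [map_add, TensorProduct.tmul_add, Finset.sum_add_distrib]
      rw [← hu, ← hv]

lemma sd_zero [Subsingleton A] (s : A ⊗[K] B) : s = 0 := by
  induction s using TensorProduct.induction_on with
  | zero => rfl
  | tmul a b => rw [Subsingleton.elim a 0, TensorProduct.zero_tmul]
  | add u v hu hv => rw [hu, hv, add_zero]

end Aux


/-- Strange duality formalism.  Let A, B be finite-dimensional K-vector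
spaces of the same dimension m and s ∈ A ⊗ B.  If there are functionals x_1,…,x_m ∈ A^*
and y_1,…,y_m ∈ B^* with (x_a ⊗ y_b)(s) = 0 for a ≠ b and (x_a ⊗ y_a)(s) ≠ 0, then:
(1) the α_a = (x_a ⊗ id)(s) form a basis of B and the β_a = (id ⊗ y_a)(s) form a basis
of A; (2) the map D : A^* → B, φ ↦ (φ ⊗ id)(s), is an isomorphism; (3) s = Σ c_a β_a ⊗ α_a
for nonzero scalars c_a (s is diagonal in these bases). -/
theorem strange_duality_formalism (K : Type*) [Field K]
    (A B : Type*) [AddCommGroup A] [Module K A] [AddCommGroup B] [Module K B]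
    [FiniteDimensional K A] [FiniteDimensional K B]
    (m : ℕ) (hA : Module.finrank K A = m) (hB : Module.finrank K B = m)
    (s : A ⊗[K] B) (x : Fin m → Module.Dual K A) (y : Fin m → Module.Dual K B)
    (horth : ∀ a b : Fin m, a ≠ b →
      TensorProduct.lid K K (TensorProduct.map (x a) (y b) s) = 0)
    (hdiag : ∀ a : Fin m,
      TensorProduct.lid K K (TensorProduct.map (x a) (y a) s) ≠ 0) :
    letI α : Fin m → B := fun a =>
      TensorProduct.lid K B (TensorProduct.map (x a) LinearMap.id s)
    letI β : Fin m → A := fun a =>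
      TensorProduct.rid K A (TensorProduct.map LinearMap.id (y a) s)
    (LinearIndependent K α ∧ Submodule.span K (Set.range α) = ⊤) ∧
    (LinearIndependent K β ∧ Submodule.span K (Set.range β) = ⊤) ∧
    Function.Bijective (fun φ : Module.Dual K A =>
      TensorProduct.lid K B (TensorProduct.map φ LinearMap.id s)) ∧
    (∃ c : Fin m → K, (∀ a, c a ≠ 0) ∧ s = ∑ a, c a • (β a ⊗ₜ[K] α a)) := by
  set α : Fin m → B := fun a =>
      TensorProduct.lid K B (TensorProduct.map (x a) LinearMap.id s) with hα
  set β : Fin m → A := fun a =>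
      TensorProduct.rid K A (TensorProduct.map LinearMap.id (y a) s) with hβ
  set d : Fin m → K := fun a => TensorProduct.lid K K (TensorProduct.map (x a) (y a) s) with hd
  -- key evaluation identities
  have hyα : ∀ a b : Fin m, y b (α a) = if a = b then d a else 0 := by
    intro a b
    rw [show y b (α a) = TensorProduct.lid K K (TensorProduct.map (x a) (y b) s) from
      sd_aux1 (x a) (y b) s]
    by_cases h : a = b
    · subst h; simp [hd]
    · simp [h, horth a b h]
  have hxβ : ∀ a b : Fin m, x a (β b) = if a = b then d a else 0 := by
    intro a b
    rw [show x a (β b) = TensorProduct.lid K K (TensorProduct.map (x a) (y b) s) from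
      sd_aux2 (x a) (y b) s]
    by_cases h : a = b
    · subst h; simp [hd]
    · simp [h, horth a b h]
  -- linear independence
  have hliα : LinearIndependent K α := by
    rw [Fintype.linearIndependent_iff]
    intro g hg b
    have := congrArg (y b) hg
    simp only [map_sum, map_smul, map_zero, smul_eq_mul, hyα] at this
    rw [Finset.sum_eq_single b (by intro c _ hc; simp [hc]) (by simp)] at this
    simpa [hd, hdiag b] using this
  have hliβ : LinearIndependent K β := by
    rw [Fintype.linearIndependent_iff]
    intro g hg a
    have := congrArg (x a) hg
    simp only [map_sum, map_smul, map_zero, smul_eq_mul, hxβ] at this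
    rw [Finset.sum_eq_single a (by intro c _ hc; simp [Ne.symm hc]) (by simp)] at this
    simpa [hd, hdiag a] using this
  rcases Nat.eq_zero_or_pos m with hm | hm
  · -- degenerate case m = 0
    subst hm
    haveI hsA : Subsingleton A := Module.finrank_zero_iff.mp hA
    haveI hsB : Subsingleton B := Module.finrank_zero_iff.mp hB
    haveI hsD : Subsingleton (Module.Dual K A) :=
      Module.finrank_zero_iff.mp (by rw [Subspace.dual_finrank_eq, hA])
    have hs0 : s = 0 := sd_zero s
    refine ⟨⟨hliα, ?_⟩, ⟨hliβ, ?_⟩, ⟨fun a b _ => Subsingleton.elim a b,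
      fun b => ⟨0, Subsingleton.elim _ _⟩⟩, fun a => Fin.elim0 a, fun a => Fin.elim0 a, by
        simp [hs0]⟩ <;>
      exact Subsingleton.elim _ _
  haveI : Nonempty (Fin m) := ⟨⟨0, hm⟩⟩
  have hcardB : Fintype.card (Fin m) = Module.finrank K B := by simp [hB]
  have hcardA : Fintype.card (Fin m) = Module.finrank K A := by simp [hA]
  have hspanα : Submodule.span K (Set.range α) = ⊤ := by
    have h := (basisOfLinearIndependentOfCardEqFinrank hliα hcardB).span_eq
    rwa [coe_basisOfLinearIndependentOfCardEqFinrank] at h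
  have hspanβ : Submodule.span K (Set.range β) = ⊤ := by
    have h := (basisOfLinearIndependentOfCardEqFinrank hliβ hcardA).span_eq
    rwa [coe_basisOfLinearIndependentOfCardEqFinrank] at h
  refine ⟨⟨hliα, hspanα⟩, ⟨hliβ, hspanβ⟩, ?_, ?_⟩
  · -- bijectivity of D
    set D : Module.Dual K A →ₗ[K] B :=
      { toFun := fun φ => TensorProduct.lid K B (TensorProduct.map φ LinearMap.id s)
        map_add' := by
          intro φ ψ
          simp [TensorProduct.map_add_left]
        map_smul' := by
          intro r φ
          simp [TensorProduct.map_smul_left] } with hD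
    have hsurj : Function.Surjective D := by
      rw [← LinearMap.range_eq_top, eq_top_iff, ← hspanα, Submodule.span_le]
      rintro _ ⟨a, rfl⟩
      exact ⟨x a, rfl⟩
    have hinj : Function.Injective D := by
      rw [LinearMap.injective_iff_surjective_of_finrank_eq_finrank
        (by rw [Subspace.dual_finrank_eq, hA, hB])]
      exact hsurj
    exact ⟨hinj, hsurj⟩
  · -- diagonality
    set bβ : Module.Basis (Fin m) K A := basisOfLinearIndependentOfCardEqFinrank hliβ hcardA with hbβ
    have hbβcoe : ⇑bβ = β := coe_basisOfLinearIndependentOfCardEqFinrank hliβ hcardA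
    set γ : Fin m → B := fun a =>
      TensorProduct.lid K B (TensorProduct.map (bβ.coord a) LinearMap.id s) with hγ
    have hexp : s = ∑ a, (β a) ⊗ₜ[K] (γ a) := by
      conv_lhs => rw [sd_expand bβ s]
      simp [hbβcoe, hγ]
    -- α a = d a • γ a
    have hαγ : ∀ a, α a = d a • γ a := by
      intro a
      have : α a = ∑ b, x a (β b) • γ b := by
        conv_lhs => rw [show α a = TensorProduct.lid K B (TensorProduct.map (x a) LinearMap.id s)
          from rfl, hexp]
        simp
      rw [this]
      rw [Finset.sum_eq_single a (by intro c _ hc; simp [hxβ, Ne.symm hc]) (by simp)]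
      simp [hxβ]
    refine ⟨fun a => (d a)⁻¹, fun a => inv_ne_zero (hdiag a), ?_⟩
    rw [hexp]
    congr 1
    ext a
    rw [smul_tmul', smul_tmul]
    congr 1
    rw [hαγ a, smul_smul, inv_mul_cancel₀ (hdiag a), one_smul]
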